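/- Let f : ℝⁿ → ℝⁿ be a C¹ map such that the Jacobian matrix Df(θ) satisfies det Df(θ) ≥ δ > 0 for all θ and ‖Df(θ) − Df(θ')‖ is uniformly controlled so that Df(θ)⁻¹ is uniformly bounded, and suppose f is a proper map. Then f is a global C¹ diffeomorphism of ℝⁿ onto ℝⁿ. -/

import Mathlib

open Set Filter Metric Topology

private lemma stmt8_locdata {n : ℕ} {f : EuclideanSpace ℝ (Fin n) → EuclideanSpace ℝ (Fin n)}
    (hf : ContDiff ℝ 1 f) (δ : ℝ) (hδ : 0 < δ)
    (hdet : ∀ θ, δ ≤ LinearMap.det ((fderiv ℝ f θ) :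
      EuclideanSpace ℝ (Fin n) →ₗ[ℝ] EuclideanSpace ℝ (Fin n)))
    (x : EuclideanSpace ℝ (Fin n)) :
    ∃ U : Set (EuclideanSpace ℝ (Fin n)), IsOpen U ∧ x ∈ U ∧ Set.InjOn f U ∧
      IsOpen (f '' U) ∧
      ∃ g, ContinuousOn g (f '' U) ∧ (∀ u ∈ U, g (f u) = u) ∧
        ∀ z ∈ f '' U, f (g z) = z ∧ g z ∈ U := by
  have hd : HasFDerivAt f (fderiv ℝ f x) x := (hf.differentiable one_ne_zero x).hasFDerivAt
  have hne : LinearMap.det ((fderiv ℝ f x) :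
      EuclideanSpace ℝ (Fin n) →ₗ[ℝ] EuclideanSpace ℝ (Fin n)) ≠ 0 :=
    ne_of_gt (lt_of_lt_of_le hδ (hdet x))
  let Φ : EuclideanSpace ℝ (Fin n) ≃L[ℝ] EuclideanSpace ℝ (Fin n) :=
    (LinearMap.equivOfDetNeZero _ hne).toContinuousLinearEquiv
  have hΦ : HasFDerivAt f (Φ : EuclideanSpace ℝ (Fin n) →L[ℝ] EuclideanSpace ℝ (Fin n)) x := by
    have : (Φ : EuclideanSpace ℝ (Fin n) →L[ℝ] EuclideanSpace ℝ (Fin n)) = fderiv ℝ f x := by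
      ext v
      simp [Φ]
    rw [this]
    exact hd
  let e := hf.contDiffAt.toOpenPartialHomeomorph f hΦ one_ne_zero
  have hcoe : ⇑e = f := ContDiffAt.toOpenPartialHomeomorph_coe _ _ _
  have himg : f '' e.source = e.target := by rw [← hcoe]; exact e.image_source_eq_target
  refine ⟨e.source, e.open_source, hf.contDiffAt.mem_toOpenPartialHomeomorph_source hΦ one_ne_zero,
    ?_, himg ▸ e.open_target, e.symm, himg ▸ e.continuousOn_symm, ?_, ?_⟩
  · have := e.injOn
    rwa [hcoe] at this
  · intro u hu
    have := e.left_inv hu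
    rwa [hcoe] at this
  · intro z hz
    rw [himg] at hz
    constructor
    · have := e.right_inv hz
      rwa [hcoe] at this
    · exact e.map_target hz

private lemma stmt8_glue {X : Type*} [TopologicalSpace X] {f : ℝ → X} {s t : Set ℝ}
    (hs : IsClosed s) (ht : IsClosed t) (hfs : ContinuousOn f s) (hft : ContinuousOn f t) :
    ContinuousOn f (s ∪ t) := by
  intro x hx
  apply ContinuousWithinAt.union
  · by_cases h : x ∈ s
    · exact hfs x h
    · exact continuousWithinAt_of_notMem_closure (by rwa [hs.closure_eq])
  · by_cases h : x ∈ t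
    · exact hft x h
    · exact continuousWithinAt_of_notMem_closure (by rwa [ht.closure_eq])

private lemma stmt8_equiv {n : ℕ} {f : EuclideanSpace ℝ (Fin n) → EuclideanSpace ℝ (Fin n)}
    (hf : ContDiff ℝ 1 f) (δ : ℝ) (hδ : 0 < δ)
    (hdet : ∀ θ, δ ≤ LinearMap.det ((fderiv ℝ f θ) :
      EuclideanSpace ℝ (Fin n) →ₗ[ℝ] EuclideanSpace ℝ (Fin n)))
    (x : EuclideanSpace ℝ (Fin n)) :
    ∃ Φ : EuclideanSpace ℝ (Fin n) ≃L[ℝ] EuclideanSpace ℝ (Fin n),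
      HasFDerivAt f (Φ : EuclideanSpace ℝ (Fin n) →L[ℝ] EuclideanSpace ℝ (Fin n)) x := by
  have hd : HasFDerivAt f (fderiv ℝ f x) x := (hf.differentiable one_ne_zero x).hasFDerivAt
  have hne : LinearMap.det ((fderiv ℝ f x) :
      EuclideanSpace ℝ (Fin n) →ₗ[ℝ] EuclideanSpace ℝ (Fin n)) ≠ 0 :=
    ne_of_gt (lt_of_lt_of_le hδ (hdet x))
  refine ⟨(LinearMap.equivOfDetNeZero _ hne).toContinuousLinearEquiv, ?_⟩
  have : ((LinearMap.equivOfDetNeZero _ hne).toContinuousLinearEquiv :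
      EuclideanSpace ℝ (Fin n) →L[ℝ] EuclideanSpace ℝ (Fin n)) = fderiv ℝ f x := by
    ext v; simp
  rw [this]; exact hd

set_option maxHeartbeats 1000000 in
private lemma stmt8_inj {n : ℕ} {f : EuclideanSpace ℝ (Fin n) → EuclideanSpace ℝ (Fin n)}
    (hfc : Continuous f)
    (locd : ∀ x, ∃ U : Set (EuclideanSpace ℝ (Fin n)), IsOpen U ∧ x ∈ U ∧ Set.InjOn f U ∧
      IsOpen (f '' U) ∧
      ∃ g, ContinuousOn g (f '' U) ∧ (∀ u ∈ U, g (f u) = u) ∧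
        ∀ z ∈ f '' U, f (g z) = z ∧ g z ∈ U)
    (hproper : IsProperMap f) : Function.Injective f := by
  intro a b hab
  set y := f a with hy
  set ℓ : ℝ → EuclideanSpace ℝ (Fin n) := fun s => f (a + s • (b - a)) with hℓ
  have hℓc : Continuous ℓ := hfc.comp (by continuity)
  have hℓ0 : ℓ 0 = y := by simp [hℓ, hy]
  have hℓ1 : ℓ 1 = y := by simp [hℓ, ← hab]
  set p : ℝ → ℝ → EuclideanSpace ℝ (Fin n) := fun t s => y + t • (ℓ s - y) with hp
  set I : Set ℝ := Icc 0 1 with hI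
  have h0I : (0:ℝ) ∈ I := left_mem_Icc.2 zero_le_one
  have h1I : (1:ℝ) ∈ I := right_mem_Icc.2 zero_le_one
  -- bound R
  obtain ⟨s₀, hs₀I, hs₀⟩ : ∃ s₀ ∈ I, ∀ s ∈ I, dist (ℓ s) y ≤ dist (ℓ s₀) y := by
    obtain ⟨s₀, hs₀I, hmax⟩ := IsCompact.exists_isMaxOn (isCompact_Icc (a := (0:ℝ)) (b := 1))
      ⟨0, h0I⟩ ((hℓc.dist continuous_const).continuousOn)
    exact ⟨s₀, hs₀I, fun s hs => hmax hs⟩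
  set R : ℝ := dist (ℓ s₀) y with hR
  have hR0 : 0 ≤ R := dist_nonneg
  set C : Set (EuclideanSpace ℝ (Fin n)) := closedBall y R with hCdef
  have hC : IsCompact C := isCompact_closedBall y R
  set K : Set (EuclideanSpace ℝ (Fin n)) := f ⁻¹' C with hKdef
  have hK : IsCompact K := hproper.isCompact_preimage hC
  have hpC : ∀ t ∈ I, ∀ s ∈ I, p t s ∈ C := by
    intro t ht s hs
    have : dist (p t s) y = |t| * dist (ℓ s) y := by
      rw [dist_eq_norm, dist_eq_norm]
      simp only [hp]
      rw [add_sub_cancel_left, norm_smul, Real.norm_eq_abs]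
    rw [mem_closedBall, this]
    calc |t| * dist (ℓ s) y ≤ 1 * R := by
          apply mul_le_mul (abs_le.2 ⟨by linarith [ht.1], ht.2⟩) (hs₀ s hs) dist_nonneg zero_le_one
      _ = R := one_mul R
  -- (A) uniform injectivity radius on K
  obtain ⟨r, hr, hA⟩ : ∃ r > 0, ∀ x ∈ K, Set.InjOn f (ball x r) := by
    choose U hUo hxU hUinj hUio g hg using locd
    obtain ⟨r, hr, hball⟩ := lebesgue_number_lemma_of_metric hK hUo
      (fun q _ => mem_iUnion.2 ⟨q, hxU q⟩)
    refine ⟨r, hr, fun x hx => ?_⟩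
    obtain ⟨q, hq⟩ := hball x hx
    exact (hUinj q).mono hq
  -- (B'') uniform local sections
  obtain ⟨η, hη, hsec⟩ : ∃ η > 0, ∀ x ∈ K, ∃ g, ContinuousOn g (ball (f x) η) ∧ g (f x) = x ∧
      ∀ z ∈ ball (f x) η, f (g z) = z ∧ g z ∈ ball x (r / 2) := by
    by_contra hcon
    push_neg at hcon
    have hcon' : ∀ m : ℕ, ∃ x ∈ K, ¬ ∃ g, ContinuousOn g (ball (f x) (1/(m+1))) ∧ g (f x) = x ∧
        ∀ z ∈ ball (f x) (1/(m+1)), f (g z) = z ∧ g z ∈ ball x (r / 2) := by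
      intro m
      obtain ⟨x, hxK, hx⟩ := hcon (1/(m+1)) (by positivity)
      refine ⟨x, hxK, ?_⟩
      rintro ⟨g, h1, h2, h3⟩
      obtain ⟨z, hz1, hz2⟩ := hx g h1 h2
      exact hz2 (h3 z hz1).1 (h3 z hz1).2
    choose x hxK hxfail using hcon'
    obtain ⟨xL, hxLK, φ, hφ, hφlim⟩ := hK.tendsto_subseq hxK
    obtain ⟨U, hUo, hxU, hUinj, hUio, g, hgc, hgl, hgr⟩ := locd xL
    have hfxL : f xL ∈ f '' U := mem_image_of_mem f hxU
    have hgat : ContinuousAt g (f xL) := hgc.continuousAt (hUio.mem_nhds hfxL)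
    have hgxL : g (f xL) = xL := hgl xL hxU
    obtain ⟨ρ1, hρ1, hρ1sub⟩ : ∃ ρ1 > 0, ball (f xL) ρ1 ⊆ f '' U :=
      Metric.isOpen_iff.1 hUio _ hfxL
    obtain ⟨ρ2, hρ2, hρ2g⟩ : ∃ ρ2 > 0, ∀ z, dist z (f xL) < ρ2 → dist (g z) xL < r / 4 := by
      have := Metric.continuousAt_iff.1 hgat (r/4) (by linarith)
      obtain ⟨ρ2, hρ2, h⟩ := this
      exact ⟨ρ2, hρ2, fun z hz => by simpa [hgxL] using h hz⟩
    set ρ : ℝ := min ρ1 ρ2 with hρdef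
    have hρ : 0 < ρ := lt_min hρ1 hρ2
    have hev : ∀ᶠ m in atTop, dist (x (φ m)) xL < r/4 ∧ x (φ m) ∈ U ∧
        dist (f (x (φ m))) (f xL) < ρ/2 ∧ (1:ℝ)/(φ m + 1) < ρ/2 := by
      have e1 : ∀ᶠ m in atTop, dist (x (φ m)) xL < r/4 :=
        hφlim (Metric.ball_mem_nhds xL (by linarith))
      have e2 : ∀ᶠ m in atTop, x (φ m) ∈ U := hφlim (hUo.mem_nhds hxU)
      have e3 : ∀ᶠ m in atTop, dist (f (x (φ m))) (f xL) < ρ/2 :=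
        ((hfc.continuousAt.tendsto).comp hφlim) (Metric.ball_mem_nhds (f xL) (by linarith))
      have e4 : ∀ᶠ m in atTop, (1:ℝ)/(φ m + 1) < ρ/2 := by
        obtain ⟨m₀, hm₀⟩ := exists_nat_gt (2/ρ)
        filter_upwards [eventually_ge_atTop m₀] with m hm
        have h1 : (m₀ : ℝ) ≤ (φ m : ℝ) + 1 := by
          have hm' : (m₀ : ℝ) ≤ m := by exact_mod_cast hm
          have h2 : (m : ℝ) ≤ (φ m : ℝ) := by exact_mod_cast hφ.le_apply
          linarith
        have hpos : (0:ℝ) < (φ m : ℝ) + 1 := by positivity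
        rw [div_lt_iff₀ hpos]
        have h2ρ : 2/ρ < (φ m : ℝ) + 1 := lt_of_lt_of_le hm₀ h1
        rw [div_lt_iff₀ hρ] at h2ρ
        calc (1:ℝ) = (2/ρ) * (ρ/2) := by field_simp
          _ < ((φ m : ℝ) + 1) * (ρ/2) := by
              apply mul_lt_mul_of_pos_right _ (by linarith)
              rw [div_lt_iff₀ hρ] at hm₀ ⊢
              linarith
          _ = ρ/2 * ((φ m : ℝ) + 1) := by ring
      exact e1.and (e2.and (e3.and e4))
    obtain ⟨m, h1, h2, h3, h4⟩ := hev.exists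
    apply hxfail (φ m)
    have hsub : ball (f (x (φ m))) (1/(φ m + 1)) ⊆ ball (f xL) ρ := by
      intro z hz
      rw [mem_ball] at hz ⊢
      calc dist z (f xL) ≤ dist z (f (x (φ m))) + dist (f (x (φ m))) (f xL) := dist_triangle _ _ _
        _ < ρ/2 + ρ/2 := by
            apply add_lt_add (lt_trans hz ?_) h3
            exact h4
        _ = ρ := by ring
    have hsub1 : ball (f xL) ρ ⊆ f '' U := le_trans (ball_subset_ball (min_le_left _ _)) hρ1sub
    refine ⟨g, hgc.mono (le_trans hsub hsub1), hgl _ h2, ?_⟩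
    intro z hz
    have hzρ : z ∈ ball (f xL) ρ := hsub hz
    have hzU : z ∈ f '' U := hsub1 hzρ
    refine ⟨(hgr z hzU).1, ?_⟩
    have hgz : dist (g z) xL < r/4 :=
      hρ2g z (lt_of_lt_of_le (mem_ball.1 hzρ) (min_le_right _ _))
    rw [mem_ball]
    calc dist (g z) (x (φ m)) ≤ dist (g z) xL + dist xL (x (φ m)) := dist_triangle _ _ _
      _ < r/4 + r/4 := add_lt_add hgz (by rw [dist_comm]; exact h1)
      _ = r/2 := by ring
  -- (CL) comparison of lifts
  have hcomp : ∀ pp qq γ dd : ℝ → EuclideanSpace ℝ (Fin n),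
      ContinuousOn γ I → ContinuousOn dd I →
      (∀ s ∈ I, f (γ s) = pp s) → (∀ s ∈ I, f (dd s) = qq s) →
      (∀ s ∈ I, pp s ∈ C) → γ 0 = dd 0 →
      (∀ s ∈ I, dist (pp s) (qq s) < η) → ∀ s ∈ I, dist (γ s) (dd s) ≤ r / 2 := by
    intro pp qq γ dd hγc hddc hγl hddl hppC h0 hclose
    have key : ∀ s ∈ I, dist (γ s) (dd s) < r → dist (γ s) (dd s) ≤ r / 2 := by
      intro s hs hlt
      have hxK : γ s ∈ K := by
        simp only [hKdef, mem_preimage]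
        rw [hγl s hs]
        exact hppC s hs
      obtain ⟨g, hgc, hgx, hgz⟩ := hsec (γ s) hxK
      have hz : qq s ∈ ball (f (γ s)) η := by
        rw [mem_ball, hγl s hs, dist_comm]
        exact hclose s hs
      obtain ⟨hfg, hgball⟩ := hgz (qq s) hz
      have heq : dd s = g (qq s) := by
        apply hA (γ s) hxK
        · rw [mem_ball, dist_comm]; exact hlt
        · exact mem_ball.2 (lt_of_lt_of_le (mem_ball.1 hgball) (by linarith))
        · rw [hddl s hs, hfg]
      rw [heq, dist_comm]
      exact le_of_lt (mem_ball.1 hgball)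
    haveI pre : PreconnectedSpace I := Subtype.preconnectedSpace isPreconnected_Icc
    have hγr : Continuous fun u : I => γ u := continuousOn_iff_continuous_restrict.1 hγc
    have hddr : Continuous fun u : I => dd u := continuousOn_iff_continuous_restrict.1 hddc
    set S : Set I := {u : I | dist (γ u) (dd u) ≤ r / 2} with hS
    have hSclosed : IsClosed S := isClosed_le (hγr.dist hddr) continuous_const
    have hSopen : IsOpen S := by
      rw [isOpen_iff_mem_nhds]
      intro u hu
      have hmem : {v : I | dist (γ v) (dd v) < r} ∈ 𝓝 u :=
        (isOpen_lt (hγr.dist hddr) continuous_const).mem_nhds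
          (lt_of_le_of_lt (show dist (γ ↑u) (dd ↑u) ≤ r / 2 from hu) (by linarith))
      filter_upwards [hmem] with v hv
      exact key v v.2 hv
    have hall : S = univ := IsClopen.eq_univ ⟨hSclosed, hSopen⟩
      ⟨⟨0, h0I⟩, by
        show dist (γ 0) (dd 0) ≤ r / 2
        rw [h0, dist_self]
        positivity⟩
    intro s hs
    have : (⟨s, hs⟩ : I) ∈ S := hall ▸ mem_univ _
    exact this
  -- (LE) existence of lifts
  have hlift : ∀ t ∈ I, ∃ γ : ℝ → EuclideanSpace ℝ (Fin n),
      ContinuousOn γ I ∧ γ 0 = a ∧ ∀ s ∈ I, f (γ s) = p t s := by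
    obtain ⟨d0, hd0, hdℓ⟩ : ∃ d > 0, ∀ s ∈ I, ∀ s' ∈ I, dist s s' < d → dist (ℓ s) (ℓ s') < η := by
      have huc := (isCompact_Icc (a := (0:ℝ)) (b := 1)).uniformContinuousOn_of_continuous
        hℓc.continuousOn
      rw [Metric.uniformContinuousOn_iff] at huc
      obtain ⟨d, hd, h⟩ := huc η hη
      exact ⟨d, hd, fun s hs s' hs' hss => h s hs s' hs' hss⟩
    obtain ⟨N, hN⟩ := exists_nat_gt (1 / d0)
    have hNpos : 0 < (N:ℝ) := lt_trans (by positivity) hN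
    have hosc : ∀ t ∈ I, ∀ s ∈ I, ∀ s' ∈ I, |s - s'| ≤ 1 / N → dist (p t s) (p t s') < η := by
      intro t ht s hs s' hs' hss
      have hd : dist (p t s) (p t s') = |t| * dist (ℓ s) (ℓ s') := by
        rw [dist_eq_norm, dist_eq_norm]
        simp only [hp]
        rw [show (y + t • (ℓ s - y)) - (y + t • (ℓ s' - y)) = t • (ℓ s - ℓ s') by
          simp only [smul_sub]; abel]
        rw [norm_smul, Real.norm_eq_abs]
      have hsd : dist s s' < d0 := by
        rw [Real.dist_eq]
        calc |s - s'| ≤ 1 / N := hss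
          _ < d0 := by
            rw [div_lt_iff₀ hNpos]
            rw [div_lt_iff₀ hd0] at hN
            linarith
      have hℓd := hdℓ s hs s' hs' hsd
      rw [hd]
      calc |t| * dist (ℓ s) (ℓ s') ≤ 1 * dist (ℓ s) (ℓ s') :=
            mul_le_mul_of_nonneg_right (abs_le.2 ⟨by linarith [ht.1], ht.2⟩) dist_nonneg
        _ = dist (ℓ s) (ℓ s') := one_mul _
        _ < η := hℓd
    intro t ht
    have hpt0 : p t 0 = y := by simp [hp, hℓ0]
    have main : ∀ i : ℕ, i ≤ N → ∃ γ : ℝ → EuclideanSpace ℝ (Fin n),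
        ContinuousOn γ (Icc 0 ((i:ℝ) / N)) ∧ γ 0 = a ∧
        ∀ s ∈ Icc (0:ℝ) ((i:ℝ) / N), f (γ s) = p t s := by
      intro i
      induction i with
      | zero =>
        intro _
        refine ⟨fun _ => a, continuousOn_const, rfl, ?_⟩
        intro s hs
        simp only [Nat.cast_zero, zero_div] at hs
        have : s = 0 := le_antisymm hs.2 hs.1
        rw [this, hpt0, ← hy]
      | succ i ih =>
        intro hiN
        obtain ⟨γ, hγc, hγ0, hγl⟩ := ih (Nat.le_of_succ_le hiN)
        set c : ℝ := (i:ℝ) / N with hc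
        set d : ℝ := ((i+1:ℕ):ℝ) / N with hd'
        have hc0 : (0:ℝ) ≤ c := by positivity
        have hcd : c ≤ d := by
          rw [hc, hd', div_le_div_iff_of_pos_right hNpos]
          push_cast; linarith
        have hdcN : d - c = 1 / N := by
          rw [hc, hd']; push_cast; field_simp; ring
        have hd1 : d ≤ 1 := by
          rw [hd', div_le_one hNpos]
          exact_mod_cast hiN
        have hcI : c ∈ I := ⟨hc0, le_trans hcd hd1⟩
        have hcc : c ∈ Icc (0:ℝ) c := ⟨hc0, le_rfl⟩
        have hfγc : f (γ c) = p t c := hγl c hcc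
        have hγcK : γ c ∈ K := by
          simp only [hKdef, mem_preimage]
          rw [hfγc]
          exact hpC t ht c hcI
        obtain ⟨g, hgc, hgx, hgz⟩ := hsec (γ c) hγcK
        have hmem : ∀ s ∈ Icc c d, p t s ∈ ball (f (γ c)) η := by
          intro s hs
          rw [hfγc, mem_ball]
          apply hosc t ht s ⟨le_trans hc0 hs.1, le_trans hs.2 hd1⟩ c hcI
          rw [abs_of_nonneg (by linarith [hs.1])]
          linarith [hs.2, hdcN]
        set γ' : ℝ → EuclideanSpace ℝ (Fin n) := fun s => if s ≤ c then γ s else g (p t s)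
          with hγ'
        have heq1 : EqOn γ' γ (Icc 0 c) := fun s hs => if_pos hs.2
        have heq2 : EqOn γ' (fun s => g (p t s)) (Icc c d) := by
          intro s hs
          simp only [hγ']
          by_cases h : s ≤ c
          · have : s = c := le_antisymm h hs.1
            rw [if_pos h, this, ← hfγc, hgx]
          · rw [if_neg h]
        have hptc : Continuous (p t) := by
          apply continuous_const.add (Continuous.const_smul (hℓc.sub continuous_const) t)
        have hcont : ContinuousOn γ' (Icc 0 d) := by
          rw [← Set.Icc_union_Icc_eq_Icc hc0 hcd]
          apply stmt8_glue isClosed_Icc isClosed_Icc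
          · exact (hγc.congr heq1)
          · refine ContinuousOn.congr ?_ heq2
            exact hgc.comp hptc.continuousOn hmem
        refine ⟨γ', hcont, ?_, ?_⟩
        · show (if (0:ℝ) ≤ c then γ 0 else g (p t 0)) = a
          rw [if_pos hc0, hγ0]
        · intro s hs
          by_cases h : s ≤ c
          · show f (if s ≤ c then γ s else g (p t s)) = p t s
            rw [if_pos h]
            exact hγl s ⟨hs.1, h⟩
          · show f (if s ≤ c then γ s else g (p t s)) = p t s
            rw [if_neg h]
            exact (hgz (p t s) (hmem s ⟨le_of_not_ge h, hs.2⟩)).1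
    obtain ⟨γ, h1, h2, h3⟩ := main N le_rfl
    rw [div_self (ne_of_gt hNpos)] at h1 h3
    exact ⟨γ, h1, h2, h3⟩
  -- endpoint rigidity and monodromy
  have hyC : y ∈ C := mem_closedBall_self hR0
  have hp1' : ∀ t : ℝ, p t 1 = y := fun t => by
    show y + t • (ℓ 1 - y) = y
    rw [hℓ1, sub_self, smul_zero, add_zero]
  have hend : ∀ t ∈ I, ∀ t' ∈ I, |t - t'| * (R + 1) < η →
      ∀ γ γ' : ℝ → EuclideanSpace ℝ (Fin n),
      (ContinuousOn γ I ∧ γ 0 = a ∧ ∀ s ∈ I, f (γ s) = p t s) →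
      (ContinuousOn γ' I ∧ γ' 0 = a ∧ ∀ s ∈ I, f (γ' s) = p t' s) →
      γ 1 = γ' 1 := by
    rintro t ht t' ht' htt γ γ' ⟨hγc, hγ0, hγl⟩ ⟨hγ'c, hγ'0, hγ'l⟩
    have hclose : ∀ s ∈ I, dist (p t s) (p t' s) < η := by
      intro s hs
      have hdist : dist (p t s) (p t' s) = |t - t'| * dist (ℓ s) y := by
        rw [dist_eq_norm, dist_eq_norm]
        show ‖(y + t • (ℓ s - y)) - (y + t' • (ℓ s - y))‖ = _
        rw [show (y + t • (ℓ s - y)) - (y + t' • (ℓ s - y)) = (t - t') • (ℓ s - y) by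
          simp only [sub_smul]; abel]
        rw [norm_smul, Real.norm_eq_abs]
      rw [hdist]
      calc |t - t'| * dist (ℓ s) y ≤ |t - t'| * (R + 1) := by
            apply mul_le_mul_of_nonneg_left _ (abs_nonneg _)
            linarith [hs₀ s hs]
        _ < η := htt
    have hdd := hcomp (p t) (p t') γ γ' hγc hγ'c hγl hγ'l (hpC t ht)
      (by rw [hγ0, hγ'0]) hclose 1 h1I
    have hγ1K : γ 1 ∈ K := by
      simp only [hKdef, mem_preimage]
      rw [hγl 1 h1I, hp1']
      exact hyC
    apply hA (γ 1) hγ1K (mem_ball_self hr)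
    · rw [mem_ball, dist_comm]
      linarith
    · rw [hγl 1 h1I, hγ'l 1 h1I, hp1', hp1']
  haveI pre : PreconnectedSpace I := Subtype.preconnectedSpace isPreconnected_Icc
  set T : Set I := {t : I | ∃ γ : ℝ → EuclideanSpace ℝ (Fin n),
    (ContinuousOn γ I ∧ γ 0 = a ∧ ∀ s ∈ I, f (γ s) = p (↑t) s) ∧ γ 1 = a} with hT
  have hε : 0 < η / (R + 1) := by positivity
  have hsame : ∀ t ∈ I, ∀ γ γ' : ℝ → EuclideanSpace ℝ (Fin n),
      (ContinuousOn γ I ∧ γ 0 = a ∧ ∀ s ∈ I, f (γ s) = p t s) →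
      (ContinuousOn γ' I ∧ γ' 0 = a ∧ ∀ s ∈ I, f (γ' s) = p t s) →
      γ 1 = γ' 1 := by
    intro t ht γ γ' h1 h2
    exact hend t ht t ht (by rw [sub_self, abs_zero, zero_mul]; exact hη) γ γ' h1 h2
  have hloc : ∀ t t' : I, dist (↑t' : ℝ) (↑t : ℝ) < η / (R + 1) → (t ∈ T ↔ t' ∈ T) := by
    intro t t' hd
    have h1 : |(↑t:ℝ) - ↑t'| * (R + 1) < η := by
      rw [Real.dist_eq, abs_sub_comm] at hd
      calc |(↑t:ℝ) - ↑t'| * (R + 1) < (η / (R + 1)) * (R + 1) :=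
            mul_lt_mul_of_pos_right hd (by linarith)
        _ = η := by field_simp
    obtain ⟨γ, hγ1, hγ2, hγ3⟩ := hlift ↑t t.2
    obtain ⟨γ', hγ'1, hγ'2, hγ'3⟩ := hlift ↑t' t'.2
    have hee : γ 1 = γ' 1 :=
      hend ↑t t.2 ↑t' t'.2 h1 γ γ' ⟨hγ1, hγ2, hγ3⟩ ⟨hγ'1, hγ'2, hγ'3⟩
    constructor
    · rintro ⟨σ, hσ, hσ1⟩
      have h2 : γ 1 = σ 1 := hsame ↑t t.2 γ σ ⟨hγ1, hγ2, hγ3⟩ hσ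
      exact ⟨γ', ⟨hγ'1, hγ'2, hγ'3⟩, by rw [← hee, h2, hσ1]⟩
    · rintro ⟨σ, hσ, hσ1⟩
      have h2 : γ' 1 = σ 1 := hsame ↑t' t'.2 γ' σ ⟨hγ'1, hγ'2, hγ'3⟩ hσ
      exact ⟨γ, ⟨hγ1, hγ2, hγ3⟩, by rw [hee, h2, hσ1]⟩
  have hVopen : ∀ t : I, IsOpen {t' : I | dist (↑t' : ℝ) (↑t : ℝ) < η / (R + 1)} :=
    fun t => isOpen_lt (continuous_subtype_val.dist continuous_const) continuous_const
  have hTopen : IsOpen T := by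
    rw [isOpen_iff_mem_nhds]
    intro t htT
    filter_upwards [(hVopen t).mem_nhds (by simp [dist_self, hε])] with t' ht'
    exact (hloc t t' ht').1 htT
  have hTcopen : IsOpen Tᶜ := by
    rw [isOpen_iff_mem_nhds]
    intro t htT
    filter_upwards [(hVopen t).mem_nhds (by simp [dist_self, hε])] with t' ht'
    intro ht'T
    exact htT ((hloc t t' ht').2 ht'T)
  have hT0 : (⟨0, h0I⟩ : I) ∈ T := by
    refine ⟨fun _ => a, ⟨continuousOn_const, rfl, ?_⟩, rfl⟩
    intro s hs
    show f a = y + (0:ℝ) • (ℓ s - y)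
    rw [zero_smul, add_zero, hy]
  have hTuniv : T = univ := IsClopen.eq_univ ⟨isOpen_compl_iff.1 hTcopen, hTopen⟩
    ⟨⟨0, h0I⟩, hT0⟩
  have hT1 : (⟨1, h1I⟩ : I) ∈ T := by rw [hTuniv]; trivial
  obtain ⟨γ, hγprops, hγ1a⟩ := hT1
  set σ : ℝ → EuclideanSpace ℝ (Fin n) := fun s => a + s • (b - a) with hσdef
  have hσc : ContinuousOn σ I :=
    (continuous_const.add (continuous_id.smul continuous_const)).continuousOn
  have hσ0 : σ 0 = a := by simp [hσdef]
  have hσ1 : σ 1 = b := by simp [hσdef]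
  have hσl : ∀ s ∈ I, f (σ s) = p 1 s := by
    intro s hs
    show f (a + s • (b - a)) = y + (1:ℝ) • (ℓ s - y)
    rw [one_smul]
    have : y + (ℓ s - y) = ℓ s := by abel
    rw [this]
  have hfin : γ 1 = σ 1 := hsame 1 h1I γ σ hγprops ⟨hσc, hσ0, hσl⟩
  rw [← hγ1a, hfin, hσ1]

private lemma stmt8_surj {n : ℕ} {f : EuclideanSpace ℝ (Fin n) → EuclideanSpace ℝ (Fin n)}
    (locd : ∀ x, ∃ U : Set (EuclideanSpace ℝ (Fin n)), IsOpen U ∧ x ∈ U ∧ Set.InjOn f U ∧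
      IsOpen (f '' U) ∧
      ∃ g, ContinuousOn g (f '' U) ∧ (∀ u ∈ U, g (f u) = u) ∧
        ∀ z ∈ f '' U, f (g z) = z ∧ g z ∈ U)
    (hproper : IsProperMap f) : Function.Surjective f := by
  have hclosed : IsClosed (range f) := hproper.isClosedMap.isClosed_range
  have hopen : IsOpen (range f) := by
    rw [isOpen_iff_mem_nhds]
    rintro z ⟨x, rfl⟩
    obtain ⟨U, hUo, hxU, _, hUio, _⟩ := locd x
    exact mem_nhds_iff.2 ⟨f '' U, image_subset_range f U, hUio, mem_image_of_mem f hxU⟩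
  have huniv : range f = univ :=
    IsClopen.eq_univ ⟨hclosed, hopen⟩ ⟨f 0, mem_range_self 0⟩
  exact range_eq_univ.1 huniv

theorem stmt8 {n : ℕ}
    (f : EuclideanSpace ℝ (Fin n) → EuclideanSpace ℝ (Fin n))
    (hf : ContDiff ℝ 1 f)
    (δ : ℝ) (hδ : 0 < δ)
    (hdet : ∀ θ, δ ≤ LinearMap.det ((fderiv ℝ f θ) :
      EuclideanSpace ℝ (Fin n) →ₗ[ℝ] EuclideanSpace ℝ (Fin n)))
    (M : ℝ) (hinv : ∀ θ, ‖(fderiv ℝ f θ).inverse‖ ≤ M)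
    (hproper : IsProperMap f) :
    ∃ g : EuclideanSpace ℝ (Fin n) → EuclideanSpace ℝ (Fin n),
      Function.LeftInverse g f ∧ Function.RightInverse g f ∧ ContDiff ℝ 1 g := by
  have locd := fun x => stmt8_locdata hf δ hδ hdet x
  have hinj : Function.Injective f := stmt8_inj hf.continuous locd hproper
  have hsurj : Function.Surjective f := stmt8_surj locd hproper
  let Eqv := Equiv.ofBijective f ⟨hinj, hsurj⟩
  refine ⟨Eqv.symm, fun x => Eqv.symm_apply_apply x, fun z => Eqv.apply_symm_apply z, ?_⟩
  rw [contDiff_iff_contDiffAt]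
  intro z
  obtain ⟨x, rfl⟩ := hsurj z
  obtain ⟨Φ, hΦ⟩ := stmt8_equiv hf δ hδ hdet x
  have hloc : ContDiffAt ℝ 1 (hf.contDiffAt.localInverse hΦ one_ne_zero) (f x) :=
    hf.contDiffAt.to_localInverse (f' := Φ) hΦ one_ne_zero
  apply hloc.congr_of_eventuallyEq
  have hev := (hf.contDiffAt.hasStrictFDerivAt' hΦ one_ne_zero).eventually_right_inverse
  filter_upwards [hev] with z hz
  apply hinj
  have hz' : f ((hf.contDiffAt.localInverse hΦ one_ne_zero) z) = z := hz
  rw [hz']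
  exact Eqv.apply_symm_apply z
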